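/- Let F ∈ ℂ[x,y] be quasi-homogeneous with respect to positive integer weights (w₁, w₂), and write F = x^A · y^B · S with x ∤ S and y ∤ S. Assume S is squarefree and nonconstant. Let α (resp. β) be the largest natural number such that x^α (resp. y^β) divides both ∂F/∂x and ∂F/∂y, and set P = (∂F/∂x)/(x^α y^β) and Q = (∂F/∂y)/(x^α y^β). Then every syzygy of the partial derivatives is a polynomial multiple of the Koszul syzygy of (P, Q): for all g, h ∈ ℂ[x,y] with g·(∂F/∂x) + h·(∂F/∂y) = 0 there exists r ∈ ℂ[x,y] with g = r·Q and h = −r·P. -/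

import Mathlib

open MvPolynomial

lemma X_mul_pderiv_monomial {σ : Type*} [DecidableEq σ] (i : σ) (m : σ →₀ ℕ) (c : ℂ) :
    X i * pderiv i (monomial m c) = monomial m (c * m i) := by
  rw [pderiv_monomial]
  by_cases h : m i = 0
  · simp [h]
  · have key : Finsupp.single i 1 + (m - Finsupp.single i 1) = m := by
      ext j
      by_cases hj : j = i
      · subst hj
        simp only [Finsupp.add_apply, Finsupp.single_eq_same, Finsupp.tsub_apply]
        omega
      · simp [Finsupp.add_apply, Finsupp.tsub_apply, Finsupp.single_apply, Ne.symm hj]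
    rw [X, monomial_mul, one_mul, key]

lemma euler_id (w₁ w₂ d : ℕ) (F : MvPolynomial (Fin 2) ℂ)
    (hqh : ∀ m ∈ F.support, w₁ * m 0 + w₂ * m 1 = d) :
    C (w₁:ℂ) * (X 0 * pderiv 0 F) + C (w₂:ℂ) * (X 1 * pderiv 1 F) = C (d:ℂ) * F := by
  have key : ∀ (s : Finset (Fin 2 →₀ ℕ)), (∀ m ∈ s, w₁ * m 0 + w₂ * m 1 = d) →
      ∀ (c : (Fin 2 →₀ ℕ) → ℂ),
      C (w₁:ℂ) * (X 0 * pderiv 0 (∑ m ∈ s, monomial m (c m))) +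
        C (w₂:ℂ) * (X 1 * pderiv 1 (∑ m ∈ s, monomial m (c m))) =
        C (d:ℂ) * (∑ m ∈ s, monomial m (c m)) := by
    intro s hs c
    rw [map_sum, map_sum, Finset.mul_sum, Finset.mul_sum, Finset.mul_sum, Finset.mul_sum,
      Finset.mul_sum, ← Finset.sum_add_distrib]
    refine Finset.sum_congr rfl fun m hm => ?_
    rw [_root_.X_mul_pderiv_monomial, _root_.X_mul_pderiv_monomial, C_mul_monomial, C_mul_monomial,
      C_mul_monomial, ← map_add]
    congr 1
    have h1 := hs m hm
    have h2 : ((w₁ : ℂ)) * (m 0) + (w₂ : ℂ) * (m 1) = (d : ℂ) := by exact_mod_cast h1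
    linear_combination (c m) * h2
  have h3 := key F.support hqh (fun m => coeff m F)
  rwa [← as_sum] at h3

lemma coeff_pderiv' {σ : Type*} [DecidableEq σ] (i : σ) (s : σ →₀ ℕ) (p : MvPolynomial σ ℂ) :
    coeff s (pderiv i p) = ((s i + 1 : ℕ) : ℂ) * coeff (s + Finsupp.single i 1) p := by
  induction p using MvPolynomial.induction_on' with
  | add p q hp hq => simp [hp, hq, mul_add]
  | monomial m c =>
    rw [pderiv_monomial, coeff_monomial, coeff_monomial]
    by_cases hm : m = s + Finsupp.single i 1
    · subst hm
      rw [if_pos (add_tsub_cancel_right s _), if_pos rfl]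
      simp only [Finsupp.add_apply, Finsupp.single_eq_same]
      push_cast
      ring
    · rw [if_neg hm, mul_zero]
      by_cases h2 : m - Finsupp.single i 1 = s
      · rw [if_pos h2]
        have hmi : m i = 0 := by
          by_contra hmi
          apply hm
          ext j
          have := DFunLike.congr_fun h2 j
          rcases eq_or_ne i j with rfl | hj
          · simp only [Finsupp.tsub_apply, Finsupp.add_apply, Finsupp.single_eq_same] at this ⊢
            omega
          · simp only [Finsupp.tsub_apply, Finsupp.add_apply,
              Finsupp.single_eq_of_ne' hj] at this ⊢
            omega
        simp [hmi]
      · rw [if_neg h2]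

lemma support_zero_of_pderiv_eq_zero {σ : Type*} [DecidableEq σ] {i : σ}
    {p : MvPolynomial σ ℂ} (h : pderiv i p = 0) : ∀ m ∈ p.support, m i = 0 := by
  intro m hm
  by_contra hmi
  have h1 : coeff (m - Finsupp.single i 1) (pderiv i p) = 0 := by rw [h]; rfl
  rw [coeff_pderiv'] at h1
  have key : (m - Finsupp.single i 1) + Finsupp.single i 1 = m := by
    ext j
    rcases eq_or_ne i j with rfl | hj
    · simp only [Finsupp.add_apply, Finsupp.tsub_apply, Finsupp.single_eq_same]; omega
    · simp only [Finsupp.add_apply, Finsupp.tsub_apply, Finsupp.single_eq_of_ne' hj]; omega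
  rw [key] at h1
  rcases mul_eq_zero.1 h1 with h2 | h2
  · exact (Nat.cast_ne_zero (R := ℂ)).2 (Nat.succ_ne_zero _) h2
  · exact mem_support_iff.1 hm h2

lemma eq_C_of_pderivs_eq_zero {p : MvPolynomial (Fin 2) ℂ}
    (h0 : pderiv 0 p = 0) (h1 : pderiv 1 p = 0) : ∃ c, p = C c := by
  refine ⟨coeff 0 p, ?_⟩
  ext n
  rcases eq_or_ne n 0 with rfl | hn
  · simp [coeff_C]
  · have hn0 : coeff n p = 0 := by
      by_contra hc
      apply hn
      ext j
      fin_cases j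
      · exact support_zero_of_pderiv_eq_zero h0 n (mem_support_iff.2 hc)
      · exact support_zero_of_pderiv_eq_zero h1 n (mem_support_iff.2 hc)
    simp [coeff_C, hn0, Ne.symm hn]

lemma finSuccEquiv_pderiv_zero (q : MvPolynomial (Fin 2) ℂ) :
    finSuccEquiv ℂ 1 (pderiv 0 q) = Polynomial.derivative (finSuccEquiv ℂ 1 q) := by
  induction q using MvPolynomial.induction_on with
  | C a =>
    rw [pderiv_C, map_zero]
    have : (finSuccEquiv ℂ 1) (C a) = Polynomial.C (C a) := by
      simp [finSuccEquiv_apply]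
    rw [this, Polynomial.derivative_C]
  | add p q hp hq => simp [hp, hq]
  | mul_X p j hp =>
    rw [pderiv_mul, map_add, map_mul, map_mul, map_mul, Polynomial.derivative_mul, hp]
    refine Fin.cases ?_ ?_ j
    · rw [pderiv_X_self, finSuccEquiv_X_zero, map_one, Polynomial.derivative_X]
    · intro k
      rw [pderiv_X_of_ne (Fin.succ_ne_zero k), finSuccEquiv_X_succ, map_zero,
        Polynomial.derivative_C]

lemma pderiv_zero_eq_zero_of_self_dvd {p : MvPolynomial (Fin 2) ℂ}
    (h : p ∣ pderiv 0 p) : pderiv 0 p = 0 := by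
  by_contra hne
  set e := finSuccEquiv ℂ 1
  have hdvd : e p ∣ Polynomial.derivative (e p) := by
    rw [← finSuccEquiv_pderiv_zero]
    exact map_dvd e.toRingEquiv.toRingHom h
  have hne' : Polynomial.derivative (e p) ≠ 0 := by
    rw [← finSuccEquiv_pderiv_zero]
    exact fun hc => hne (by simpa using e.injective (by simpa using hc))
  have hle := Polynomial.natDegree_le_of_dvd hdvd hne'
  rcases eq_or_ne (e p).natDegree 0 with h0 | h0
  · exact hne' (by rw [Polynomial.derivative_of_natDegree_zero h0])
  · exact absurd hle (not_le.2 (Polynomial.natDegree_derivative_lt h0))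

lemma pderiv_one_eq_zero_of_self_dvd {p : MvPolynomial (Fin 2) ℂ}
    (h : p ∣ pderiv 1 p) : pderiv 1 p = 0 := by
  set sw : Fin 2 ≃ Fin 2 := Equiv.swap 0 1
  have hsw1 : sw 1 = 0 := Equiv.swap_apply_right 0 1
  have hr : rename sw (pderiv 1 p) = pderiv 0 (rename sw p) := by
    have := pderiv_rename (f := (sw : Fin 2 → Fin 2)) sw.injective 1 p
    rw [hsw1] at this
    exact this.symm
  have hdvd : rename sw p ∣ pderiv 0 (rename sw p) := by
    rw [← hr]
    exact map_dvd (rename (sw : Fin 2 → Fin 2) : MvPolynomial (Fin 2) ℂ →ₐ[ℂ] _).toRingHom h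
  have := pderiv_zero_eq_zero_of_self_dvd hdvd
  rw [← hr] at this
  have hinj : Function.Injective (rename (R := ℂ) (sw : Fin 2 → Fin 2)) :=
    rename_injective _ sw.injective
  have : rename sw (pderiv 1 p) = rename sw 0 := by simpa using this
  exact hinj this

lemma prime_X0 : Prime (X 0 : MvPolynomial (Fin 2) ℂ) := by
  have : Prime (Polynomial.X : Polynomial (MvPolynomial (Fin 1) ℂ)) := Polynomial.prime_X
  rw [← finSuccEquiv_X_zero (R := ℂ) (n := 1)] at this
  exact (MulEquiv.prime_iff (finSuccEquiv ℂ 1).toRingEquiv.toMulEquiv).1 this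

lemma prime_X1 : Prime (X 1 : MvPolynomial (Fin 2) ℂ) := by
  have h0 : Prime (X 0 : MvPolynomial (Fin 2) ℂ) := prime_X0
  have : (renameEquiv ℂ (Equiv.swap (0 : Fin 2) 1)) (X 0) = X 1 := by
    simp [renameEquiv_apply, Equiv.swap_apply_left]
  rw [← this]
  exact (MulEquiv.prime_iff (renameEquiv ℂ (Equiv.swap (0:Fin 2) 1)).toRingEquiv.toMulEquiv).2 h0

/-- Main assertion of Lemma 4.1 (zeroSum), single-facet case: every syzygy of the
partial derivatives of a quasi-homogeneous polynomial with squarefree nonconstant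
saturation is a polynomial multiple of the Koszul syzygy of the saturated partials. -/
theorem syzygy_of_partials_is_multiple_of_koszul
    (w₁ w₂ d : ℕ) (hw₁ : 0 < w₁) (hw₂ : 0 < w₂)
    (F S P Q : MvPolynomial (Fin 2) ℂ) (A B α β : ℕ)
    (hqh : ∀ m ∈ F.support, w₁ * m 0 + w₂ * m 1 = d)
    (hfac : F = X 0 ^ A * X 1 ^ B * S)
    (hxS : ¬ X 0 ∣ S) (hyS : ¬ X 1 ∣ S)
    (hsqf : Squarefree S) (hS_nonconst : S.totalDegree ≠ 0)
    (hα : X 0 ^ α ∣ pderiv 0 F ∧ X 0 ^ α ∣ pderiv 1 F)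
    (hαmax : ¬ (X 0 ^ (α + 1) ∣ pderiv 0 F ∧ X 0 ^ (α + 1) ∣ pderiv 1 F))
    (hβ : X 1 ^ β ∣ pderiv 0 F ∧ X 1 ^ β ∣ pderiv 1 F)
    (hβmax : ¬ (X 1 ^ (β + 1) ∣ pderiv 0 F ∧ X 1 ^ (β + 1) ∣ pderiv 1 F))
    (hP : pderiv 0 F = X 0 ^ α * X 1 ^ β * P)
    (hQ : pderiv 1 F = X 0 ^ α * X 1 ^ β * Q) :
    ∀ g h : MvPolynomial (Fin 2) ℂ,
      g * pderiv 0 F + h * pderiv 1 F = 0 →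
      ∃ r : MvPolynomial (Fin 2) ℂ, g = r * Q ∧ h = -r * P := by
  intro g h hsyz
  have hne : ¬(pderiv 0 F = 0 ∧ pderiv 1 F = 0) := by
    rintro ⟨h1, h2⟩
    exact hαmax ⟨h1 ▸ dvd_zero _, h2 ▸ dvd_zero _⟩
  -- d ≠ 0
  have hd : d ≠ 0 := by
    rintro rfl
    apply hne
    have hsup : ∀ m ∈ F.support, ∀ j : Fin 2, m j = 0 := by
      intro m hm j
      have hmm := hqh m hm
      rcases Nat.add_eq_zero.1 hmm with ⟨h1, h2⟩
      have e0 : m 0 = 0 := by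
        rcases Nat.mul_eq_zero.1 h1 with hc | hc
        · omega
        · exact hc
      have e1 : m 1 = 0 := by
        rcases Nat.mul_eq_zero.1 h2 with hc | hc
        · omega
        · exact hc
      fin_cases j
      · exact e0
      · exact e1
    obtain ⟨c, hc⟩ : ∃ c, F = C c := by
      refine ⟨coeff 0 F, ?_⟩
      ext n
      rcases eq_or_ne n 0 with rfl | hn
      · simp [coeff_C]
      · have hn0 : coeff n F = 0 := by
          by_contra hcc
          exact hn (by ext j; exact hsup n (mem_support_iff.2 hcc) j)
        simp [coeff_C, hn0, Ne.symm hn]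
    rw [hc]
    exact ⟨pderiv_C, pderiv_C⟩
  have heuler := euler_id w₁ w₂ d F hqh
  -- no common prime factor of P and Q
  have key : ∀ π : MvPolynomial (Fin 2) ℂ, Prime π → π ∣ P → π ∣ Q → False := by
    intro π hπ hπP hπQ
    have hπFx : π ∣ pderiv 0 F := hP ▸ hπP.mul_left _
    have hπFy : π ∣ pderiv 1 F := hQ ▸ hπQ.mul_left _
    have hπF : π ∣ F := by
      have h1 : π ∣ C (d:ℂ) * F := by
        rw [← heuler]
        exact dvd_add ((hπFx.mul_left _).mul_left _) ((hπFy.mul_left _).mul_left _)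
      have hd' : (d : ℂ) ≠ 0 := Nat.cast_ne_zero.2 hd
      have h2 : F = C (d:ℂ) * F * C ((d:ℂ)⁻¹) := by
        rw [mul_comm (C (d:ℂ)) F, mul_assoc, ← C_mul, mul_inv_cancel₀ hd', C_1, mul_one]
      exact h2 ▸ h1.mul_right _
    by_cases hx : π ∣ X 0
    · have hX0π : (X 0 : MvPolynomial (Fin 2) ℂ) ∣ π := by
        rcases hx with ⟨u, hu⟩
        rcases prime_X0.irreducible.isUnit_or_isUnit hu with h1 | h1
        · exact absurd h1 hπ.not_unit
        · rcases h1 with ⟨v, rfl⟩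
          exact ⟨↑v⁻¹, by rw [hu, mul_assoc, v.mul_inv, mul_one]⟩
      apply hαmax
      constructor
      · rcases hX0π.trans hπP with ⟨P', hP'⟩
        exact ⟨X 1 ^ β * P', by rw [hP, hP', pow_succ]; ring⟩
      · rcases hX0π.trans hπQ with ⟨Q', hQ'⟩
        exact ⟨X 1 ^ β * Q', by rw [hQ, hQ', pow_succ]; ring⟩
    by_cases hy : π ∣ X 1
    · have hX1π : (X 1 : MvPolynomial (Fin 2) ℂ) ∣ π := by
        rcases hy with ⟨u, hu⟩
        rcases prime_X1.irreducible.isUnit_or_isUnit hu with h1 | h1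
        · exact absurd h1 hπ.not_unit
        · rcases h1 with ⟨v, rfl⟩
          exact ⟨↑v⁻¹, by rw [hu, mul_assoc, v.mul_inv, mul_one]⟩
      apply hβmax
      constructor
      · rcases hX1π.trans hπP with ⟨P', hP'⟩
        exact ⟨X 0 ^ α * P', by rw [hP, hP', pow_succ]; ring⟩
      · rcases hX1π.trans hπQ with ⟨Q', hQ'⟩
        exact ⟨X 0 ^ α * Q', by rw [hQ, hQ', pow_succ]; ring⟩
    have hπS : π ∣ S := by
      rw [hfac] at hπF
      rcases hπ.dvd_mul.1 hπF with h1 | h1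
      · rcases hπ.dvd_mul.1 h1 with h2 | h2
        · exact absurd (hπ.dvd_of_dvd_pow h2) hx
        · exact absurd (hπ.dvd_of_dvd_pow h2) hy
      · exact h1
    obtain ⟨T, hT⟩ := hπS
    have hπT : ¬ π ∣ T := by
      rintro ⟨T', rfl⟩
      exact hπ.not_unit (hsqf π ⟨T', by rw [hT]; ring⟩)
    have hπM : ¬ π ∣ (X 0 ^ A * X 1 ^ B : MvPolynomial (Fin 2) ℂ) := by
      intro hc
      rcases hπ.dvd_mul.1 hc with h2 | h2
      · exact hx (hπ.dvd_of_dvd_pow h2)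
      · exact hy (hπ.dvd_of_dvd_pow h2)
    have hdS : ∀ i : Fin 2, π ∣ pderiv i F → π ∣ pderiv i S := by
      intro i hi
      rw [hfac, pderiv_mul] at hi
      have h1 : π ∣ pderiv i (X 0 ^ A * X 1 ^ B) * S := (Dvd.intro T hT.symm).mul_left _
      have h2 : π ∣ (X 0 ^ A * X 1 ^ B) * pderiv i S := (dvd_add_right h1).1 hi
      rcases hπ.dvd_mul.1 h2 with h3 | h3
      · exact absurd h3 hπM
      · exact h3
    have hdπ : ∀ i : Fin 2, π ∣ pderiv i S → π ∣ pderiv i π := by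
      intro i hi
      rw [hT, pderiv_mul] at hi
      have h2 : π ∣ pderiv i π * T := (dvd_add_left (dvd_mul_right π _)).1 hi
      rcases hπ.dvd_mul.1 h2 with h3 | h3
      · exact h3
      · exact absurd h3 hπT
    have h0 : pderiv 0 π = 0 := pderiv_zero_eq_zero_of_self_dvd (hdπ 0 (hdS 0 hπFx))
    have h1 : pderiv 1 π = 0 := pderiv_one_eq_zero_of_self_dvd (hdπ 1 (hdS 1 hπFy))
    obtain ⟨c, rfl⟩ := eq_C_of_pderivs_eq_zero h0 h1
    rcases eq_or_ne c 0 with rfl | hc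
    · exact hπ.ne_zero (map_zero C)
    · exact hπ.not_unit ((isUnit_iff_ne_zero.2 hc).map C)
  -- reduce the syzygy
  have hMne : (X 0 ^ α * X 1 ^ β : MvPolynomial (Fin 2) ℂ) ≠ 0 :=
    mul_ne_zero (pow_ne_zero _ (X_ne_zero _)) (pow_ne_zero _ (X_ne_zero _))
  have hred : g * P + h * Q = 0 := by
    have h1 : (X 0 ^ α * X 1 ^ β) * (g * P + h * Q) = 0 := by
      rw [hP, hQ] at hsyz
      linear_combination hsyz
    rcases mul_eq_zero.1 h1 with hc | hc
    · exact absurd hc hMne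
    · exact hc
  by_cases hQ0 : Q = 0
  · have hPne : P ≠ 0 := by
      intro hP0
      exact hne ⟨by rw [hP, hP0, mul_zero], by rw [hQ, hQ0, mul_zero]⟩
    have hPunit : IsUnit P := by
      by_contra hnu
      obtain ⟨i, hi, hid⟩ := WfDvdMonoid.exists_irreducible_factor hnu hPne
      exact key i ((UniqueFactorizationMonoid.irreducible_iff_prime).1 hi) hid
        (hQ0 ▸ dvd_zero i)
    obtain ⟨u, hu⟩ := hPunit
    have hFxne : pderiv 0 F ≠ 0 := by
      intro hc
      exact hne ⟨hc, by rw [hQ, hQ0, mul_zero]⟩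
    have hg0 : g = 0 := by
      have h1 : g * pderiv 0 F = 0 := by
        rw [hQ, hQ0, mul_zero, mul_zero, add_zero] at hsyz
        exact hsyz
      rcases mul_eq_zero.1 h1 with hc | hc
      · exact hc
      · exact absurd hc hFxne
    refine ⟨-h * ↑u⁻¹, by rw [hg0, hQ0, mul_zero], ?_⟩
    rw [← hu]
    have huu : ((↑u⁻¹ : MvPolynomial (Fin 2) ℂ)) * ↑u = 1 := u.inv_mul
    calc (h : MvPolynomial (Fin 2) ℂ) = h * ((↑u⁻¹ : MvPolynomial (Fin 2) ℂ) * ↑u) := by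
          rw [huu, mul_one]
      _ = -(-h * ↑u⁻¹) * ↑u := by ring
  · have hrel : IsRelPrime Q P := by
      intro z hzQ hzP
      by_contra hnu
      have hz0 : z ≠ 0 := fun h0 => hQ0 (zero_dvd_iff.1 (h0 ▸ hzQ))
      obtain ⟨i, hi, hid⟩ := WfDvdMonoid.exists_irreducible_factor hnu hz0
      exact key i ((UniqueFactorizationMonoid.irreducible_iff_prime).1 hi) (hid.trans hzP)
        (hid.trans hzQ)
    have hQg : Q ∣ g := hrel.dvd_of_dvd_mul_right ⟨-h, by linear_combination hred⟩
    obtain ⟨r, hr⟩ := hQg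
    refine ⟨r, by rw [hr]; ring, ?_⟩
    have h1 : Q * (r * P + h) = 0 := by
      rw [hr] at hred
      linear_combination hred
    rcases mul_eq_zero.1 h1 with hc | hc
    · exact absurd hc hQ0
    · linear_combination hc
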